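/- For every μ > 0 there exists a unique e(μ) < 0 such that (μ/(2π)) ∫_T dq/(𝔢(q) - e(μ)) = 1, and for every μ < 0 there exists a unique e(μ) > 4 with the same property; moreover Δ(μ; z) ≠ 0 for all other z ∈ ℝ \ [0,4]. -/

import Mathlib

open Real

noncomputable def 𝔢 (q : ℝ) : ℝ := (1 - Real.cos q) ^ 2

/-- `∫_T dq/(𝔢(q) - z)`. -/
noncomputable def I (z : ℝ) : ℝ := ∫ q in (-π)..π, 1 / (𝔢 q - z)

/-- `Δ(μ; z) = 1 - (μ/(2π)) ∫_T dq/(𝔢(q) - z)`. -/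
noncomputable def Δ (μ z : ℝ) : ℝ := 1 - μ / (2 * π) * I z

open MeasureTheory intervalIntegral Filter Topology

lemma e_nonneg (q : ℝ) : 0 ≤ 𝔢 q := sq_nonneg _

lemma e_le_four (q : ℝ) : 𝔢 q ≤ 4 := by
  have h1 := Real.neg_one_le_cos q
  have h2 := Real.cos_le_one q
  unfold 𝔢; nlinarith

lemma e_le_q4 (q : ℝ) : 𝔢 q ≤ q ^ 4 / 4 := by
  have h1 := Real.one_sub_sq_div_two_le_cos (x := q)
  have h2 := Real.cos_le_one q
  unfold 𝔢; nlinarith [sq_nonneg q]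

lemma e_ge (u : ℝ) : 4 - 2 * u ^ 2 ≤ 𝔢 (π - u) := by
  have hc : Real.cos (π - u) = -Real.cos u := Real.cos_pi_sub u
  have h1 := Real.one_sub_sq_div_two_le_cos (x := u)
  have h2 := Real.cos_le_one u
  unfold 𝔢; rw [hc]; nlinarith [sq_nonneg (1 - Real.cos u)]

lemma cont_e : Continuous 𝔢 := by
  unfold 𝔢; fun_prop

lemma cont_integrand {z : ℝ} (hz : z < 0 ∨ 4 < z) :
    Continuous fun q => 1 / (𝔢 q - z) := by
  apply Continuous.div continuous_const (cont_e.sub continuous_const)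
  intro q
  rcases hz with h | h
  · have := e_nonneg q; intro hq; simp only [Pi.sub_apply] at hq; linarith [hq]
  · have := e_le_four q; intro hq; simp only [Pi.sub_apply] at hq; linarith [hq]

lemma integrable_integrand {z : ℝ} (hz : z < 0 ∨ 4 < z) (a b : ℝ) :
    IntervalIntegrable (fun q => 1 / (𝔢 q - z)) volume a b :=
  (cont_integrand hz).intervalIntegrable a b


lemma pi_pos' : (-π) ≤ π := by linarith [Real.pi_pos]

lemma I_strictMono_neg : StrictMonoOn I (Set.Iio 0) := by
  intro z₁ h₁ z₂ h₂ hlt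
  simp only [Set.mem_Iio] at h₁ h₂
  set c : ℝ := (z₂ - z₁) / ((4 - z₁) * (4 - z₂)) with hc
  have hcpos : 0 < c := by
    apply div_pos (by linarith); nlinarith
  have key : I z₁ + 2 * π * c ≤ I z₂ := by
    have h2 : (∫ q in (-π)..π, (1 / (𝔢 q - z₁) + c)) ≤ I z₂ := by
      apply intervalIntegral.integral_mono_on pi_pos'
        ((integrable_integrand (Or.inl h₁) _ _).add (intervalIntegrable_const))
        (integrable_integrand (Or.inl h₂) _ _)
      intro q _
      have e0 := e_nonneg q
      have e4 := e_le_four q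
      have d₁ : 0 < 𝔢 q - z₁ := by linarith
      have d₂ : 0 < 𝔢 q - z₂ := by linarith
      have expand : 1 / (𝔢 q - z₂) - 1 / (𝔢 q - z₁)
          = (z₂ - z₁) / ((𝔢 q - z₁) * (𝔢 q - z₂)) := by
        field_simp; ring_nf
      have hle : c ≤ (z₂ - z₁) / ((𝔢 q - z₁) * (𝔢 q - z₂)) := by
        apply div_le_div_of_nonneg_left (by linarith) (by positivity)
        nlinarith
      linarith [expand, hle]
    have h1 : (∫ q in (-π)..π, (1 / (𝔢 q - z₁) + c)) = I z₁ + 2 * π * c := by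
      rw [intervalIntegral.integral_add (integrable_integrand (Or.inl h₁) _ _)
        intervalIntegrable_const, intervalIntegral.integral_const, smul_eq_mul]
      unfold I; ring
    linarith
  have : 0 < 2 * π * c := by positivity
  linarith

lemma I_strictMono_gt4 : StrictMonoOn I (Set.Ioi 4) := by
  intro z₁ h₁ z₂ h₂ hlt
  simp only [Set.mem_Ioi] at h₁ h₂
  set c : ℝ := (z₂ - z₁) / (z₁ * z₂) with hc
  have hz₁ : (0:ℝ) < z₁ := by linarith
  have hz₂ : (0:ℝ) < z₂ := by linarith
  have hcpos : 0 < c := by apply div_pos (by linarith); positivity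
  have key : I z₁ + 2 * π * c ≤ I z₂ := by
    have h2 : (∫ q in (-π)..π, (1 / (𝔢 q - z₁) + c)) ≤ I z₂ := by
      apply intervalIntegral.integral_mono_on pi_pos'
        ((integrable_integrand (Or.inr h₁) _ _).add (intervalIntegrable_const))
        (integrable_integrand (Or.inr h₂) _ _)
      intro q _
      have e0 := e_nonneg q
      have e4 := e_le_four q
      have d₁ : 0 < z₁ - 𝔢 q := by linarith
      have d₂ : 0 < z₂ - 𝔢 q := by linarith
      have expand : 1 / (𝔢 q - z₂) - 1 / (𝔢 q - z₁)
          = (z₂ - z₁) / ((z₁ - 𝔢 q) * (z₂ - 𝔢 q)) := by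
        have n1 : 𝔢 q - z₁ ≠ 0 := by linarith
        have n2 : 𝔢 q - z₂ ≠ 0 := by linarith
        field_simp; ring_nf
      have hle : c ≤ (z₂ - z₁) / ((z₁ - 𝔢 q) * (z₂ - 𝔢 q)) := by
        apply div_le_div_of_nonneg_left (by linarith) (by positivity)
        nlinarith
      linarith [expand, hle]
    have h1 : (∫ q in (-π)..π, (1 / (𝔢 q - z₁) + c)) = I z₁ + 2 * π * c := by
      rw [intervalIntegral.integral_add (integrable_integrand (Or.inr h₁) _ _)
        intervalIntegrable_const, intervalIntegral.integral_const, smul_eq_mul]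
      unfold I; ring
    linarith
  have : 0 < 2 * π * c := by positivity
  linarith


lemma contAt_I_neg {z₀ : ℝ} (h : z₀ < 0) : ContinuousAt I z₀ := by
  have hmem : Set.Iio (z₀ / 2) ∈ 𝓝 z₀ := Iio_mem_nhds (by linarith)
  apply intervalIntegral.continuousAt_of_dominated_interval
    (bound := fun _ => 2 / (-z₀)) (F := fun z q => 1 / (𝔢 q - z))
  · filter_upwards [hmem] with z hz
    exact (cont_integrand (Or.inl (lt_of_lt_of_le hz (by simp at hz ⊢; linarith)))).aestronglyMeasurable
  · filter_upwards [hmem] with z hz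
    filter_upwards with q _
    simp only [Set.mem_Iio] at hz
    have e0 := e_nonneg q
    have d : 0 < 𝔢 q - z := by linarith
    rw [Real.norm_eq_abs, abs_of_pos (by positivity)]
    rw [div_le_div_iff₀ d (by linarith)]
    linarith
  · exact intervalIntegrable_const
  · filter_upwards with q _
    apply ContinuousAt.div continuousAt_const (by fun_prop)
    have := e_nonneg q; intro hq; linarith

lemma contAt_I_gt4 {z₀ : ℝ} (h : 4 < z₀) : ContinuousAt I z₀ := by
  have hmem : Set.Ioi ((z₀ + 4) / 2) ∈ 𝓝 z₀ := Ioi_mem_nhds (by linarith)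
  apply intervalIntegral.continuousAt_of_dominated_interval
    (bound := fun _ => 2 / (z₀ - 4)) (F := fun z q => 1 / (𝔢 q - z))
  · filter_upwards [hmem] with z hz
    simp only [Set.mem_Ioi] at hz
    exact (cont_integrand (Or.inr (by linarith))).aestronglyMeasurable
  · filter_upwards [hmem] with z hz
    filter_upwards with q _
    simp only [Set.mem_Ioi] at hz
    have e4 := e_le_four q
    have d : 𝔢 q - z < 0 := by linarith
    rw [Real.norm_eq_abs, abs_of_neg (by apply div_neg_of_pos_of_neg one_pos d),
      show -(1/(𝔢 q - z)) = 1/(z - 𝔢 q) by rw [one_div, one_div, ← inv_neg, neg_sub]]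
    rw [div_le_div_iff₀ (by linarith) (by linarith)]
    linarith
  · exact intervalIntegrable_const
  · filter_upwards with q _
    apply ContinuousAt.div continuousAt_const (by fun_prop)
    have := e_le_four q; intro hq; linarith

lemma I_nonneg {z : ℝ} (h : z < 0) : 0 ≤ I z := by
  apply intervalIntegral.integral_nonneg (by linarith [Real.pi_pos])
  intro q _
  have h1 := e_nonneg q
  have h2 : 0 < 𝔢 q - z := by linarith
  positivity

lemma I_le {z : ℝ} (h : z < 0) : I z ≤ 2 * π / (-z) := by
  have h2 : I z ≤ ∫ _ in (-π)..π, 1 / (-z) := by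
    apply intervalIntegral.integral_mono_on (by linarith [Real.pi_pos])
      (integrable_integrand (Or.inl h) _ _) intervalIntegrable_const
    intro q _
    have := e_nonneg q
    apply div_le_div_of_nonneg_left one_pos.le (by linarith) (by linarith)
  rw [intervalIntegral.integral_const, smul_eq_mul] at h2
  calc I z ≤ (π - -π) * (1 / (-z)) := h2
    _ = 2 * π / (-z) := by ring

lemma I_nonpos {z : ℝ} (h : 4 < z) : I z ≤ 0 := by
  rw [show (0:ℝ) = ∫ _ in (-π)..π, (0:ℝ) by simp]
  apply intervalIntegral.integral_mono_on (by linarith [Real.pi_pos])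
    (integrable_integrand (Or.inr h) _ _) intervalIntegrable_const
  intro q _
  have := e_le_four q
  apply div_nonpos_of_nonneg_of_nonpos one_pos.le (by linarith)

lemma I_ge {z : ℝ} (h : 4 < z) : -(2 * π / (z - 4)) ≤ I z := by
  have h2 : (∫ _ in (-π)..π, -(1 / (z - 4))) ≤ I z := by
    apply intervalIntegral.integral_mono_on (by linarith [Real.pi_pos])
      intervalIntegrable_const (integrable_integrand (Or.inr h) _ _)
    intro q _
    have e0 := e_nonneg q
    have e4 := e_le_four q
    rw [neg_le, show -(1/(𝔢 q - z)) = 1/(z - 𝔢 q) by rw [one_div, one_div, ← inv_neg, neg_sub]]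
    rw [div_le_div_iff₀ (by linarith) (by linarith)]
    nlinarith
  rw [intervalIntegral.integral_const, smul_eq_mul] at h2
  calc -(2 * π / (z - 4)) = (π - -π) * (-(1 / (z - 4))) := by ring
    _ ≤ I z := h2


lemma I_blowup_neg {δ : ℝ} (hδ : 0 < δ) (hδπ : δ ≤ π) :
    4 / δ ^ 3 ≤ I (-(δ ^ 4 / 4)) := by
  have hp4 := pow_pos hδ 4
  have hp3 := pow_pos hδ 3
  have hp2 := pow_pos hδ 2
  obtain ⟨z, hzdef⟩ : ∃ z : ℝ, z = -(δ ^ 4 / 4) := ⟨_, rfl⟩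
  rw [← hzdef]
  have hz : z < 0 := by rw [hzdef]; linarith
  have hint := integrable_integrand (Or.inl hz)
  have split1 : (∫ q in (-π)..(-δ), 1 / (𝔢 q - z)) + (∫ q in (-δ)..π, 1 / (𝔢 q - z))
      = I z := intervalIntegral.integral_add_adjacent_intervals (hint _ _) (hint _ _)
  have split2 : (∫ q in (-δ)..δ, 1 / (𝔢 q - z)) + (∫ q in δ..π, 1 / (𝔢 q - z))
      = ∫ q in (-δ)..π, 1 / (𝔢 q - z) :=
    intervalIntegral.integral_add_adjacent_intervals (hint _ _) (hint _ _)
  have pos : ∀ q : ℝ, 0 ≤ 1 / (𝔢 q - z) := by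
    intro q
    have h1 := e_nonneg q
    have h2 : 0 < 𝔢 q - z := by linarith
    positivity
  have h1 : 0 ≤ ∫ q in (-π)..(-δ), 1 / (𝔢 q - z) :=
    intervalIntegral.integral_nonneg (by linarith) (fun q _ => pos q)
  have h3 : 0 ≤ ∫ q in δ..π, 1 / (𝔢 q - z) :=
    intervalIntegral.integral_nonneg (by linarith) (fun q _ => pos q)
  have h2 : 4 / δ ^ 3 ≤ ∫ q in (-δ)..δ, 1 / (𝔢 q - z) := by
    have hmid : (∫ _ in (-δ)..δ, 2 / δ ^ 4) ≤ ∫ q in (-δ)..δ, 1 / (𝔢 q - z) := by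
      apply intervalIntegral.integral_mono_on (by linarith) intervalIntegrable_const
        (hint _ _)
      intro q hq
      obtain ⟨hq1, hq2⟩ := hq
      have habs : |q| ≤ δ := abs_le.mpr ⟨hq1, hq2⟩
      have hq4 : q ^ 4 ≤ δ ^ 4 := by
        calc q ^ 4 ≤ |q| ^ 4 := by rw [pow_abs]; exact le_abs_self _
          _ ≤ δ ^ 4 := pow_le_pow_left₀ (abs_nonneg q) habs 4
      have he := e_le_q4 q
      have h1 := e_nonneg q
      have hd : 0 < 𝔢 q - z := by linarith
      rw [div_le_div_iff₀ (by linarith) hd]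
      have : 𝔢 q - z ≤ δ ^ 4 / 2 := by
        rw [hzdef]; linarith
      nlinarith
    rw [intervalIntegral.integral_const, smul_eq_mul] at hmid
    calc 4 / δ ^ 3 = (δ - -δ) * (2 / δ ^ 4) := by field_simp; ring
      _ ≤ _ := hmid
  linarith

lemma I_blowup_4 {δ : ℝ} (hδ : 0 < δ) (hδπ : δ ≤ 2 * π) :
    I (4 + 2 * δ ^ 2) ≤ -(1 / (4 * δ)) := by
  have hp2 := pow_pos hδ 2
  obtain ⟨z, hzdef⟩ : ∃ z : ℝ, z = 4 + 2 * δ ^ 2 := ⟨_, rfl⟩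
  rw [← hzdef]
  have hz : 4 < z := by rw [hzdef]; nlinarith
  have hint := integrable_integrand (Or.inr hz)
  have split1 : (∫ q in (-π)..(π - δ), 1 / (𝔢 q - z)) + (∫ q in (π - δ)..π, 1 / (𝔢 q - z))
      = I z := intervalIntegral.integral_add_adjacent_intervals (hint _ _) (hint _ _)
  have neg : ∀ q : ℝ, 1 / (𝔢 q - z) ≤ 0 := by
    intro q
    have h1 := e_le_four q
    apply div_nonpos_of_nonneg_of_nonpos one_pos.le (by linarith)
  have h1 : (∫ q in (-π)..(π - δ), 1 / (𝔢 q - z)) ≤ 0 := by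
    rw [show (0:ℝ) = ∫ _ in (-π)..(π - δ), (0:ℝ) by simp]
    apply intervalIntegral.integral_mono_on (by linarith) (hint _ _) intervalIntegrable_const
    exact fun q _ => neg q
  have h2 : (∫ q in (π - δ)..π, 1 / (𝔢 q - z)) ≤ -(1 / (4 * δ)) := by
    have hmid : (∫ q in (π - δ)..π, 1 / (𝔢 q - z)) ≤ ∫ _ in (π - δ)..π, -(1 / (4 * δ ^ 2)) := by
      apply intervalIntegral.integral_mono_on (by linarith) (hint _ _) intervalIntegrable_const
      intro q hq
      obtain ⟨hq1, hq2⟩ := hq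
      have hu := e_ge (π - q)
      rw [show π - (π - q) = q by ring] at hu
      have husq : (π - q) ^ 2 ≤ δ ^ 2 := by nlinarith
      have he4 := e_le_four q
      have hd : 𝔢 q - z < 0 := by linarith
      rw [show -(1/(4 * δ ^ 2)) = 1/(-(4 * δ ^ 2)) by rw [one_div, one_div, ← inv_neg],
        show (1:ℝ)/(𝔢 q - z) = -(1/(z - 𝔢 q)) by rw [one_div, one_div, ← inv_neg, neg_sub],
        neg_le, show -(1/(-(4 * δ ^ 2))) = 1/(4 * δ ^ 2) by rw [one_div, one_div, ← inv_neg, neg_neg]]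
      rw [div_le_div_iff₀ (by linarith) (by linarith)]
      have : z - 𝔢 q ≤ 4 * δ ^ 2 := by rw [hzdef]; nlinarith
      linarith
    rw [intervalIntegral.integral_const, smul_eq_mul] at hmid
    calc (∫ q in (π - δ)..π, 1 / (𝔢 q - z)) ≤ (π - (π - δ)) * (-(1 / (4 * δ ^ 2))) := hmid
      _ = -(1 / (4 * δ)) := by field_simp; ring
  linarith


theorem exists_unique_eigenvalue (μ : ℝ) :
    (0 < μ → (∃! e : ℝ, e < 0 ∧ μ / (2 * π) * I e = 1) ∧ ∀ z > (4 : ℝ), Δ μ z ≠ 0) ∧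
    (μ < 0 → (∃! e : ℝ, 4 < e ∧ μ / (2 * π) * I e = 1) ∧ ∀ z < (0 : ℝ), Δ μ z ≠ 0) := by
  have hπ := Real.pi_pos
  have hπ1 := Real.pi_gt_three
  constructor
  · intro hμ
    constructor
    · -- existence and uniqueness, μ > 0
      set δ : ℝ := min π (min 1 (μ / π)) with hδdef
      have hδ0 : 0 < δ := by
        apply lt_min hπ; apply lt_min one_pos; positivity
      have hδπ : δ ≤ π := min_le_left _ _
      have hδ1 : δ ≤ 1 := le_trans (min_le_right _ _) (min_le_left _ _)
      have hδμ : δ ≤ μ / π := le_trans (min_le_right _ _) (min_le_right _ _)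
      have hδ3 := pow_pos hδ0 3
      set b : ℝ := -(δ ^ 4 / 4) with hbdef
      have hb0 : b < 0 := by
        have := pow_pos hδ0 4; rw [hbdef]; linarith
      have fb : 1 < μ / (2 * π) * I b := by
        have h1 : μ / (2 * π) * (4 / δ ^ 3) ≤ μ / (2 * π) * I b :=
          mul_le_mul_of_nonneg_left (I_blowup_neg hδ0 hδπ) (by positivity)
        have h2 : 1 < μ / (2 * π) * (4 / δ ^ 3) := by
          rw [show μ / (2 * π) * (4 / δ ^ 3) = 2 * μ / (π * δ ^ 3) by
            field_simp; ring]
          rw [lt_div_iff₀ (by positivity)]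
          have hsq : δ ^ 2 ≤ 1 := by nlinarith
          have hd3 : δ ^ 3 ≤ δ := by nlinarith
          have hπδ : δ * π ≤ μ := (le_div_iff₀ hπ).mp hδμ
          nlinarith
        linarith
      set a : ℝ := min (-(2 * μ)) (b - 1) with hadef
      have hab : a ≤ b := le_trans (min_le_right _ _) (by linarith)
      have ha0 : a < 0 := lt_of_le_of_lt hab hb0
      have ha2μ : 2 * μ ≤ -a := by
        have := min_le_left (-(2 * μ)) (b - 1); rw [hadef]; linarith [this]
      have fa : μ / (2 * π) * I a < 1 := by
        have h1 : μ / (2 * π) * I a ≤ μ / (2 * π) * (2 * π / (-a)) :=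
          mul_le_mul_of_nonneg_left (I_le ha0) (by positivity)
        have h2 : μ / (2 * π) * (2 * π / (-a)) = μ / (-a) := by
          field_simp
        have h3 : μ / (-a) < 1 := by
          rw [div_lt_one (by linarith)]; linarith
        linarith
      have cont : ContinuousOn (fun z => μ / (2 * π) * I z) (Set.Icc a b) := by
        intro z hz
        exact (continuousAt_const.mul (contAt_I_neg (lt_of_le_of_lt hz.2 hb0))).continuousWithinAt
      have hmem : (1 : ℝ) ∈ Set.Icc (μ / (2 * π) * I a) (μ / (2 * π) * I b) :=
        ⟨le_of_lt fa, le_of_lt fb⟩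
      obtain ⟨e, he, hfe'0⟩ := intermediate_value_Icc hab cont hmem
      have hfe : μ / (2 * π) * I e = 1 := hfe'0
      have he0 : e < 0 := lt_of_le_of_lt he.2 hb0
      refine ⟨e, ⟨he0, hfe⟩, ?_⟩
      rintro e' ⟨he'0, hfe'⟩
      have hc : (μ / (2 * π)) ≠ 0 := by positivity
      have hI : I e' = I e := by
        apply mul_left_cancel₀ hc; rw [hfe, hfe']
      exact I_strictMono_neg.injOn (Set.mem_Iio.mpr he'0) (Set.mem_Iio.mpr he0) hI
    · intro z hz hC
      have h1 : μ / (2 * π) * I z ≤ 0 :=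
        mul_nonpos_of_nonneg_of_nonpos (by positivity) (I_nonpos hz)
      unfold Δ at hC; linarith
  · intro hμ
    constructor
    · set δ : ℝ := min 1 (-μ / (16 * π)) with hδdef
      have hδ0 : 0 < δ := by
        apply lt_min one_pos; apply div_pos (by linarith) (by positivity)
      have hδπ : δ ≤ 2 * π := le_trans (min_le_left _ _) (by linarith)
      have hδμ : δ ≤ -μ / (16 * π) := min_le_right _ _
      set a : ℝ := 4 + 2 * δ ^ 2 with hadef
      have ha4 : 4 < a := by rw [hadef]; nlinarith
      have fa : 1 < μ / (2 * π) * I a := by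
        have h1 : μ / (2 * π) * I a ≥ μ / (2 * π) * (-(1 / (4 * δ))) :=
          mul_le_mul_of_nonpos_left (I_blowup_4 hδ0 hδπ) (by
            apply div_nonpos_of_nonpos_of_nonneg (le_of_lt hμ); linarith)
        have h2 : μ / (2 * π) * (-(1 / (4 * δ))) = -μ / (8 * π * δ) := by
          have hδne : δ ≠ 0 := ne_of_gt hδ0
          have hπne : π ≠ 0 := ne_of_gt hπ
          field_simp
          try ring
          try tauto
        have h3 : 1 < -μ / (8 * π * δ) := by
          rw [lt_div_iff₀ (by positivity)]
          have : 16 * π * δ ≤ -μ := by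
            have := (le_div_iff₀ (by positivity : (0:ℝ) < 16 * π)).mp hδμ; linarith
          linarith
        linarith
      set b : ℝ := max (4 - 2 * μ) (a + 1) with hbdef
      have hab : a ≤ b := le_trans (by linarith) (le_max_right _ _)
      have hb4 : 4 < b := lt_of_lt_of_le ha4 hab
      have hb2μ : -(2 * μ) ≤ b - 4 := by
        have := le_max_left (4 - 2 * μ) (a + 1); rw [hbdef]; linarith [this]
      have fb : μ / (2 * π) * I b < 1 := by
        have h1 : μ / (2 * π) * I b ≤ μ / (2 * π) * (-(2 * π / (b - 4))) :=
          mul_le_mul_of_nonpos_left (I_ge hb4) (by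
            apply div_nonpos_of_nonpos_of_nonneg (le_of_lt hμ); linarith)
        have h2 : μ / (2 * π) * (-(2 * π / (b - 4))) = -μ / (b - 4) := by
          have hπne : π ≠ 0 := ne_of_gt hπ
          have hbne : b - 4 ≠ 0 := sub_ne_zero.mpr (by linarith)
          field_simp
          try ring
          try tauto
        have h3 : -μ / (b - 4) < 1 := by
          rw [div_lt_one (by linarith)]; linarith
        linarith
      have cont : ContinuousOn (fun z => μ / (2 * π) * I z) (Set.Icc a b) := by
        intro z hz
        exact (continuousAt_const.mul (contAt_I_gt4 (lt_of_lt_of_le ha4 hz.1))).continuousWithinAt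
      have hmem : (1 : ℝ) ∈ Set.Icc (μ / (2 * π) * I b) (μ / (2 * π) * I a) :=
        ⟨le_of_lt fb, le_of_lt fa⟩
      obtain ⟨e, he, hfe'0⟩ := intermediate_value_Icc' hab cont hmem
      have hfe : μ / (2 * π) * I e = 1 := hfe'0
      have he4 : 4 < e := lt_of_lt_of_le ha4 he.1
      refine ⟨e, ⟨he4, hfe⟩, ?_⟩
      rintro e' ⟨he'4, hfe'⟩
      have hc : (μ / (2 * π)) ≠ 0 := by
        apply div_ne_zero (ne_of_lt hμ); positivity
      have hI : I e' = I e := by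
        apply mul_left_cancel₀ hc; rw [hfe, hfe']
      exact I_strictMono_gt4.injOn (Set.mem_Ioi.mpr he'4) (Set.mem_Ioi.mpr he4) hI
    · intro z hz hC
      have h1 : μ / (2 * π) * I z ≤ 0 :=
        mul_nonpos_of_nonpos_of_nonneg (by
          apply div_nonpos_of_nonpos_of_nonneg (le_of_lt hμ); linarith) (I_nonneg hz)
      unfold Δ at hC; linarith
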